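/- In the Firework process on ℕ, constructed from i.i.d. radii (R_i)_{i≥0} with P(R_0 ≤ k) = α_k, the final number of spreaders M satisfies M = min{ i ≥ 0 : R_j ≤ i - j for all j = 0,...,i }, and the probability of survival P(M = ∞) equals (1 + ∑_{j≥1} ∏_{i=0}^{j-1} α_i)^{-1}, interpreted as 0 when the series diverges. -/

import Mathlib

open MeasureTheory ProbabilityTheory Filter Finset
open scoped ENNReal

noncomputable def fireworkM {Ω : Type*} (R : ℕ → Ω → ℕ) (ω : Ω) : ℕ∞ :=
  sInf {N : ℕ∞ | ∃ i : ℕ, N = (i : ℕ∞) ∧ ∀ j ≤ i, R j ω ≤ i - j}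

section aux
variable {Ω : Type*}

lemma rumor_reindex_sum {M : Type*} [AddCommMonoid M] (g : ℕ → M) (a c : ℕ) :
    ∑ j ∈ Finset.Icc a c, g (c - j) = ∑ k ∈ Finset.range (c + 1 - a), g k := by
  refine Finset.sum_nbij' (fun j => c - j) (fun k => c - k) ?_ ?_ ?_ ?_ (fun x hx => rfl)
  all_goals intro x hx <;> simp only [Finset.mem_Icc, Finset.mem_range] at * <;> omega

lemma rumor_reindex_prod {M : Type*} [CommMonoid M] (g : ℕ → M) (a c : ℕ) :
    ∏ j ∈ Finset.Icc a c, g (c - j) = ∏ k ∈ Finset.range (c + 1 - a), g k := by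
  refine Finset.prod_nbij' (fun j => c - j) (fun k => c - k) ?_ ?_ ?_ ?_ (fun x hx => rfl)
  all_goals intro x hx <;> simp only [Finset.mem_Icc, Finset.mem_range] at * <;> omega

lemma rumor_shift_sum {M : Type*} [AddCommMonoid M] (g : ℕ → M) (a c : ℕ) :
    ∑ j ∈ Finset.Icc a c, g (j - a) = ∑ k ∈ Finset.range (c + 1 - a), g k := by
  refine Finset.sum_nbij' (fun j => j - a) (fun k => a + k) ?_ ?_ ?_ ?_ (fun x hx => rfl)
  all_goals intro x hx; simp only [Finset.mem_Icc, Finset.mem_range] at *; omega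

lemma fireworkM_eq_sInf (R : ℕ → Ω → ℕ) (ω : Ω) :
    fireworkM R ω
      = sInf ((fun i : ℕ => (i : ℕ∞)) '' {i : ℕ | ∀ j, j ≤ i → R j ω ≤ i - j}) := by
  unfold fireworkM; congr 1; ext N
  constructor
  · rintro ⟨i, rfl, h⟩; exact ⟨i, fun j hj => h j hj, rfl⟩
  · rintro ⟨i, h, rfl⟩; exact ⟨i, rfl, fun j hj => h j hj⟩

lemma fireworkM_eq_top_iff (R : ℕ → Ω → ℕ) (ω : Ω) :
    fireworkM R ω = ⊤ ↔ ∀ i : ℕ, ¬ ∀ j, j ≤ i → R j ω ≤ i - j := by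
  rw [fireworkM_eq_sInf]
  constructor
  · intro h i hi
    have hle : sInf ((fun i : ℕ => (i : ℕ∞)) '' {i : ℕ | ∀ j, j ≤ i → R j ω ≤ i - j}) ≤ (i : ℕ∞) :=
      sInf_le ⟨i, hi, rfl⟩
    rw [h, top_le_iff] at hle
    exact ENat.coe_ne_top i hle
  · intro h
    have : {i : ℕ | ∀ j, j ≤ i → R j ω ≤ i - j} = ∅ := Set.eq_empty_iff_forall_notMem.mpr h
    rw [this, Set.image_empty, sInf_empty]

lemma fireworkM_eq_coe_iff (R : ℕ → Ω → ℕ) (ω : Ω) (m : ℕ) :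
    fireworkM R ω = (m : ℕ∞) ↔
      ((∀ j, j ≤ m → R j ω ≤ m - j) ∧ ∀ l, l < m → ¬ ∀ j, j ≤ l → R j ω ≤ l - j) := by
  rw [fireworkM_eq_sInf]
  set T := {i : ℕ | ∀ j, j ≤ i → R j ω ≤ i - j} with hT
  constructor
  · intro h
    have hne : T.Nonempty := by
      by_contra hne
      rw [Set.not_nonempty_iff_eq_empty] at hne
      rw [hne, Set.image_empty, sInf_empty] at h
      exact ENat.coe_ne_top m h.symm
    have h1 : ((sInf T : ℕ) : ℕ∞) = (m : ℕ∞) := by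
      rw [← h]
      apply le_antisymm
      · refine le_sInf ?_
        rintro b ⟨i, hi, rfl⟩
        exact Nat.cast_le.mpr (Nat.sInf_le hi)
      · exact sInf_le ⟨sInf T, Nat.sInf_mem hne, rfl⟩
    have h2 : sInf T = m := Nat.cast_inj.mp h1
    constructor
    · have := Nat.sInf_mem hne; rwa [h2] at this
    · intro l hl
      exact Nat.notMem_of_lt_sInf (by rw [h2]; exact hl)
  · rintro ⟨hm, hl⟩
    apply le_antisymm
    · exact sInf_le ⟨m, hm, rfl⟩
    · refine le_sInf ?_
      rintro b ⟨i, hi, rfl⟩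
      refine Nat.cast_le.mpr ?_
      by_contra hc
      push_neg at hc
      exact hl i hc hi

end aux

theorem rumor_stmt_2 {Ω : Type*} [MeasurableSpace Ω] (P : Measure Ω) [IsProbabilityMeasure P]
    (R : ℕ → Ω → ℕ) (hmeas : ∀ i, Measurable (R i))
    (hindep : iIndepFun R P)
    (hident : ∀ i, Measure.map (R i) P = Measure.map (R 0) P)
    (α : ℕ → ℝ≥0∞) (hα : ∀ k, P {ω | R 0 ω ≤ k} = α k)
    (hα0 : 0 < α 0 ∧ α 0 < 1) :
    P {ω | fireworkM R ω = ⊤} =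
      (1 + ∑' j : ℕ, ∏ i ∈ Finset.range (j + 1), α i)⁻¹ := by
  classical
  -- the basic events
  set A : ℕ → Set Ω := fun i => {ω | ∀ j, j ≤ i → R j ω ≤ i - j} with hAdef
  set S2 : ℕ → ℕ → Set Ω := fun m i => {ω | ∀ j, m < j → j ≤ i → R j ω ≤ i - j} with hS2def
  set E : ℕ → Set Ω := fun m =>
    {ω | (∀ j, j ≤ m → R j ω ≤ m - j) ∧ ∀ l, l < m → ¬ ∀ j, j ≤ l → R j ω ≤ l - j} with hEdef
  set v : ℕ → ℝ≥0∞ := fun n => ∏ k ∈ Finset.range n, α k with hvdef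
  set f : ℕ → ℝ≥0∞ := fun m => P (E m) with hfdef
  -- single radius probabilities
  have hone : ∀ j k, P {ω | R j ω ≤ k} = α k := by
    intro j k
    have h1 : {ω | R j ω ≤ k} = R j ⁻¹' {n | n ≤ k} := rfl
    rw [h1, ← Measure.map_apply (hmeas j) ((Set.to_countable _).measurableSet), hident j,
      Measure.map_apply (hmeas 0) ((Set.to_countable _).measurableSet)]
    exact hα k
  -- probability of windows
  have hwin : ∀ a c : ℕ, P (⋂ j ∈ Finset.Icc a c, {ω | R j ω ≤ c - j})
      = ∏ k ∈ Finset.range (c + 1 - a), α k := by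
    intro a c
    rw [hindep.meas_biInter (S := Finset.Icc a c) (s := fun j => {ω | R j ω ≤ c - j})
      (fun j _ => ⟨{n | n ≤ c - j}, (Set.to_countable _).measurableSet, rfl⟩)]
    rw [Finset.prod_congr rfl fun j _ => hone j (c - j)]
    exact rumor_reindex_prod α a c
  have hAset : ∀ i, A i = ⋂ j ∈ Finset.Icc 0 i, {ω | R j ω ≤ i - j} := by
    intro i; ext ω
    simp [hAdef, Finset.mem_Icc]
  have hS2set : ∀ m i, S2 m i = ⋂ j ∈ Finset.Icc (m + 1) i, {ω | R j ω ≤ i - j} := by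
    intro m i; ext ω
    simp only [hS2def, Set.mem_setOf_eq, Set.mem_iInter, Finset.mem_Icc, and_imp]
    constructor
    · intro h j h1 h2; exact h j h1 h2
    · intro h j h1 h2; exact h j h1 h2
  have hPA : ∀ i, P (A i) = v (i + 1) := by
    intro i; rw [hAset i, hwin 0 i]; simp [hvdef]
  have hPS2 : ∀ m i, P (S2 m i) = v (i - m) := by
    intro m i
    rw [hS2set m i, hwin (m + 1) i, show i + 1 - (m + 1) = i - m from by omega]
  -- measurability
  have hmA : ∀ i, MeasurableSet (A i) := by
    intro i
    rw [hAset i]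
    exact Finset.measurableSet_biInter _
      (fun j _ => (hmeas j) (show MeasurableSet {n : ℕ | n ≤ i - j} from
        (Set.to_countable _).measurableSet))
  have hmS2 : ∀ m i, MeasurableSet (S2 m i) := by
    intro m i
    rw [hS2set m i]
    exact Finset.measurableSet_biInter _
      (fun j _ => (hmeas j) (show MeasurableSet {n : ℕ | n ≤ i - j} from
        (Set.to_countable _).measurableSet))
  have hmE : ∀ m, MeasurableSet (E m) := by
    intro m
    have : E m = A m ∩ ⋂ l ∈ Finset.range m, (A l)ᶜ := by
      ext ω
      simp [hEdef, hAdef, Finset.mem_range]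
    rw [this]
    exact (hmA m).inter (Finset.measurableSet_biInter _ (fun l _ => (hmA l).compl))
  -- independence of E m and S2 m i
  have hEind : ∀ m i : ℕ, P (E m ∩ S2 m i) = P (E m) * P (S2 m i) := by
    intro m i
    have hd : Disjoint (Finset.range (m + 1)) (Finset.Icc (m + 1) i) := by
      rw [Finset.disjoint_left]
      intro x hx hx'
      simp only [Finset.mem_range, Finset.mem_Icc] at hx hx'
      omega
    have hIF := hindep.indepFun_finset (Finset.range (m + 1)) (Finset.Icc (m + 1) i) hd hmeas
    set B : Set ((j : ↥(Finset.range (m + 1))) → ℕ) :=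
      {x | (∀ j, ∀ h : j ≤ m, x ⟨j, Finset.mem_range.mpr (Nat.lt_succ_of_le h)⟩ ≤ m - j) ∧
        (∀ l, ∀ _ : l < m, ¬ ∀ j, ∀ h : j ≤ l,
          x ⟨j, Finset.mem_range.mpr (by omega)⟩ ≤ l - j)} with hBdef
    set C : Set ((j : ↥(Finset.Icc (m + 1) i)) → ℕ) :=
      {y | ∀ j, ∀ h1 : m < j, ∀ h2 : j ≤ i, y ⟨j, Finset.mem_Icc.mpr ⟨h1, h2⟩⟩ ≤ i - j} with hCdef
    have key := hIF.measure_inter_preimage_eq_mul B C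
      ((Set.to_countable _).measurableSet) ((Set.to_countable _).measurableSet)
    have hB : (fun a (j : ↥(Finset.range (m + 1))) => R (↑j) a) ⁻¹' B = E m := rfl
    have hC : (fun a (j : ↥(Finset.Icc (m + 1) i)) => R (↑j) a) ⁻¹' C = S2 m i := rfl
    rw [hB, hC] at key
    exact key
  -- disjointness of the E m
  have hdisjE : Pairwise (Function.onFun Disjoint E) := by
    intro m m' hmm'
    rw [Function.onFun, Set.disjoint_left]
    intro ω hm hm'
    have h1 : fireworkM R ω = (m : ℕ∞) := (fireworkM_eq_coe_iff R ω m).mpr hm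
    have h2 : fireworkM R ω = (m' : ℕ∞) := (fireworkM_eq_coe_iff R ω m').mpr hm'
    exact hmm' (Nat.cast_inj.mp (h1 ▸ h2))
  -- renewal decomposition
  have hdecomp : ∀ i, A i = ⋃ m ∈ Finset.range (i + 1), (E m ∩ S2 m i) := by
    intro i
    ext ω
    simp only [Set.mem_iUnion, Finset.mem_range, Set.mem_inter_iff, exists_prop]
    constructor
    · intro hAi
      have hAi' : ∀ j, j ≤ i → R j ω ≤ i - j := hAi
      have hne : {k : ℕ | ∀ j, j ≤ k → R j ω ≤ k - j}.Nonempty := ⟨i, hAi'⟩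
      set m := sInf {k : ℕ | ∀ j, j ≤ k → R j ω ≤ k - j} with hmdef
      have hm_le : m ≤ i := Nat.sInf_le hAi'
      have hmem := Nat.sInf_mem hne
      refine ⟨m, by omega, ⟨hmem, fun l hl =>
        show l ∉ {k : ℕ | ∀ j, j ≤ k → R j ω ≤ k - j} from Nat.notMem_of_lt_sInf hl⟩, ?_⟩
      intro j _ hj2
      exact hAi' j hj2
    · rintro ⟨m, hmi, ⟨hAm, _⟩, hS⟩
      intro j hj
      by_cases hjm : j ≤ m
      · exact le_trans (hAm j hjm) (Nat.sub_le_sub_right (by omega) j)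
      · exact hS j (by omega) hj
  -- the renewal identity
  have hkey : ∀ i, v (i + 1) = ∑ m ∈ Finset.range (i + 1), f m * v (i - m) := by
    intro i
    rw [← hPA i, hdecomp i,
      measure_biUnion_finset ?_ (fun m _ => (hmE m).inter (hmS2 m i))]
    · exact Finset.sum_congr rfl fun m _ => by rw [hEind m i, hPS2 m i]
    · intro m _ m' _ hmm'
      exact Set.disjoint_left.mpr fun ω hw hw' =>
        Set.disjoint_left.mp (hdisjE hmm') hw.1 hw'.1
  -- v is bounded by one and partial sums are finite
  have hv1 : ∀ n, v n ≤ 1 :=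
    fun n => Finset.prod_le_one (fun k _ => zero_le)
      (fun k _ => by rw [← hα k]; exact prob_le_one)
  have hUnfin : ∀ n, (∑ i ∈ Finset.range n, v (i + 1)) ≠ ⊤ := by
    intro n
    refine (ENNReal.sum_lt_top.mpr fun i _ => ?_).ne
    exact lt_of_le_of_lt (hv1 (i + 1)) ENNReal.one_lt_top
  -- finite sums as tsums
  have hfin_sum : ∀ i : ℕ, (∑ m ∈ Finset.range (i + 1), f m * v (i - m))
      = ∑' m : ℕ, (if m ≤ i then f m * v (i - m) else 0) := by
    intro i
    have h1 : (∑' m : ℕ, (if m ≤ i then f m * v (i - m) else 0))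
        = ∑ m ∈ Finset.range (i + 1), (if m ≤ i then f m * v (i - m) else 0) :=
      tsum_eq_sum (fun b hb => if_neg (by simp only [Finset.mem_range] at hb; omega))
    rw [h1]
    exact Finset.sum_congr rfl fun m hm =>
      (if_pos (by simp only [Finset.mem_range] at hm; omega)).symm
  have hinner : ∀ m : ℕ, (∑' i : ℕ, if m ≤ i then f m * v (i - m) else 0)
      = f m * ∑' d : ℕ, v d := by
    intro m
    have hinj : Function.Injective (fun d : ℕ => m + d) := fun a b h => by simpa using h
    have hsupp : Function.support (fun i : ℕ => if m ≤ i then f m * v (i - m) else 0)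
        ⊆ Set.range (fun d : ℕ => m + d) := by
      intro x hx
      rcases le_or_gt m x with h | h
      · exact ⟨x - m, show m + (x - m) = x from by omega⟩
      · exact absurd (if_neg (by omega)) hx
    calc (∑' i : ℕ, if m ≤ i then f m * v (i - m) else 0)
        = ∑' d : ℕ, (if m ≤ m + d then f m * v (m + d - m) else 0) :=
          (Function.Injective.tsum_eq hinj hsupp).symm
      _ = ∑' d : ℕ, f m * v d := by
          refine tsum_congr fun d => ?_
          rw [if_pos (Nat.le_add_right m d), Nat.add_sub_cancel_left]
      _ = f m * ∑' d : ℕ, v d := ENNReal.tsum_mul_left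
  have hUsum : (∑' d : ℕ, v d) = 1 + ∑' j : ℕ, v (j + 1) := by
    rw [tsum_eq_zero_add' ENNReal.summable, show v 0 = 1 from by simp [hvdef]]
  have hmaster : (∑' j : ℕ, v (j + 1)) = (∑' m, f m) * (1 + ∑' j : ℕ, v (j + 1)) := by
    calc (∑' j : ℕ, v (j + 1))
        = ∑' i : ℕ, ∑' m : ℕ, (if m ≤ i then f m * v (i - m) else 0) :=
          tsum_congr fun i => by rw [hkey i, hfin_sum i]
      _ = ∑' m : ℕ, ∑' i : ℕ, (if m ≤ i then f m * v (i - m) else 0) := ENNReal.tsum_comm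
      _ = ∑' m : ℕ, f m * (1 + ∑' j : ℕ, v (j + 1)) :=
          tsum_congr fun m => by rw [hinner m, hUsum]
      _ = (∑' m, f m) * (1 + ∑' j : ℕ, v (j + 1)) := ENNReal.tsum_mul_right
  -- extinction probability
  have hcompl : {ω | fireworkM R ω = ⊤} = (⋃ m, E m)ᶜ := by
    ext ω
    simp only [Set.mem_setOf_eq, Set.mem_compl_iff, Set.mem_iUnion, not_exists]
    constructor
    · intro h m hm
      have h2 := (fireworkM_eq_coe_iff R ω m).mpr hm
      rw [h] at h2
      exact ENat.coe_ne_top m h2.symm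
    · intro h
      rw [fireworkM_eq_top_iff]
      intro i hi
      have hne : {k : ℕ | ∀ j, j ≤ k → R j ω ≤ k - j}.Nonempty := ⟨i, hi⟩
      exact h _ ⟨Nat.sInf_mem hne, fun l hl =>
        show ¬ ∀ j, j ≤ l → R j ω ≤ l - j from Nat.notMem_of_lt_sInf hl⟩
  have hFsum : P (⋃ m, E m) = ∑' m, f m := measure_iUnion hdisjE hmE
  have hPtop : P {ω | fireworkM R ω = ⊤} = 1 - ∑' m, f m := by
    rw [hcompl, measure_compl (MeasurableSet.iUnion hmE) (measure_ne_top P _),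
      measure_univ, hFsum]
  have hFle : (∑' m, f m) ≤ 1 := by rw [← hFsum]; exact prob_le_one
  have hFt : (∑' m, f m) ≠ ⊤ := (lt_of_le_of_lt hFle ENNReal.one_lt_top).ne
  -- rewrite the goal in terms of v
  have hre : (1 + ∑' j : ℕ, ∏ i ∈ Finset.range (j + 1), α i)⁻¹
      = (1 + ∑' j : ℕ, v (j + 1))⁻¹ := rfl
  rw [hre]
  by_cases hUtop : (∑' j : ℕ, v (j + 1)) = ⊤
  · -- divergent series : extinction is a.s.
    have hbound : ∀ n, (∑ i ∈ Finset.range n, v (i + 1))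
        ≤ (∑' m, f m) * (1 + ∑ i ∈ Finset.range n, v (i + 1)) := by
      intro n
      have hstep : ∀ m, m ∈ Finset.range n →
          (∑ i ∈ Finset.range n, if m ≤ i then f m * v (i - m) else 0)
            ≤ f m * (1 + ∑ i ∈ Finset.range n, v (i + 1)) := by
        intro m _
        have h1 : ∀ i : ℕ, (if m ≤ i then f m * v (i - m) else 0)
            = f m * (if m ≤ i then v (i - m) else 0) := by
          intro i; split <;> simp
        rw [Finset.sum_congr rfl fun i _ => h1 i, ← Finset.mul_sum]
        refine mul_le_mul_right ?_ (f m)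
        rcases Nat.lt_or_ge m n with hmn | hmn
        · have h2 : (∑ i ∈ Finset.range n, if m ≤ i then v (i - m) else 0)
              = ∑ i ∈ Finset.Icc m (n - 1), (if m ≤ i then v (i - m) else 0) := by
            refine (Finset.sum_subset ?_ ?_).symm
            · intro x hx; simp only [Finset.mem_Icc, Finset.mem_range] at *; omega
            · intro x hx hx'
              simp only [Finset.mem_Icc, Finset.mem_range] at hx hx'
              exact if_neg (by omega)
          rw [h2, Finset.sum_congr rfl fun i hi =>
            if_pos (by simp only [Finset.mem_Icc] at hi; omega)]
          rw [rumor_shift_sum v m (n - 1)]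
          calc (∑ k ∈ Finset.range (n - 1 + 1 - m), v k)
              ≤ ∑ k ∈ Finset.range (n + 1), v k :=
                Finset.sum_le_sum_of_subset (Finset.range_subset_range.mpr (by omega))
            _ = (∑ k ∈ Finset.range n, v (k + 1)) + v 0 := Finset.sum_range_succ' v n
            _ = 1 + ∑ i ∈ Finset.range n, v (i + 1) := by
                rw [show v 0 = 1 from by simp [hvdef], add_comm]
        · rw [Finset.sum_eq_zero fun i hi =>
            if_neg (by simp only [Finset.mem_range] at hi; omega)]
          exact zero_le
      calc (∑ i ∈ Finset.range n, v (i + 1))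
          = ∑ i ∈ Finset.range n, ∑ m ∈ Finset.range (i + 1), f m * v (i - m) :=
            Finset.sum_congr rfl fun i _ => hkey i
        _ ≤ ∑ i ∈ Finset.range n, ∑ m ∈ Finset.range n,
              (if m ≤ i then f m * v (i - m) else 0) := by
            refine Finset.sum_le_sum fun i hi => ?_
            rw [Finset.sum_congr rfl fun m hm =>
              show f m * v (i - m) = (if m ≤ i then f m * v (i - m) else 0) from
                (if_pos (by simp only [Finset.mem_range] at hm; omega)).symm]
            exact Finset.sum_le_sum_of_subset
              (Finset.range_subset_range.mpr (by simp only [Finset.mem_range] at hi; omega))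
        _ = ∑ m ∈ Finset.range n, ∑ i ∈ Finset.range n,
              (if m ≤ i then f m * v (i - m) else 0) := Finset.sum_comm
        _ ≤ ∑ m ∈ Finset.range n, f m * (1 + ∑ i ∈ Finset.range n, v (i + 1)) :=
            Finset.sum_le_sum hstep
        _ = (∑ m ∈ Finset.range n, f m) * (1 + ∑ i ∈ Finset.range n, v (i + 1)) :=
            (Finset.sum_mul _ _ _).symm
        _ ≤ (∑' m, f m) * (1 + ∑ i ∈ Finset.range n, v (i + 1)) :=
            mul_le_mul_left (ENNReal.sum_le_tsum _) _
    have hF1 : (∑' m, f m) = 1 := by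
      by_contra hne
      have hFlt : (∑' m, f m) < 1 := lt_of_le_of_ne hFle hne
      have h1F0 : (1 : ℝ≥0∞) - (∑' m, f m) ≠ 0 := by
        simp only [ne_eq, tsub_eq_zero_iff_le, not_le]; exact hFlt
      have h1Ft : (1 : ℝ≥0∞) - (∑' m, f m) ≠ ⊤ :=
        (lt_of_le_of_lt tsub_le_self ENNReal.one_lt_top).ne
      have hcap : ∀ n, (∑ i ∈ Finset.range n, v (i + 1))
          ≤ (∑' m, f m) / (1 - ∑' m, f m) := by
        intro n
        have h1 : (∑ i ∈ Finset.range n, v (i + 1))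
            ≤ (∑' m, f m) + (∑' m, f m) * (∑ i ∈ Finset.range n, v (i + 1)) := by
          have hb := hbound n; rwa [mul_add, mul_one] at hb
        have h2 : (∑ i ∈ Finset.range n, v (i + 1))
              - (∑ i ∈ Finset.range n, v (i + 1)) * (∑' m, f m) ≤ (∑' m, f m) := by
          rw [mul_comm]; exact tsub_le_iff_right.mpr h1
        have h3 : (∑ i ∈ Finset.range n, v (i + 1)) * (1 - ∑' m, f m) ≤ (∑' m, f m) := by
          rw [ENNReal.mul_sub (fun _ _ => hUnfin n), mul_one]
          exact h2
        exact (ENNReal.le_div_iff_mul_le (Or.inl h1F0) (Or.inl h1Ft)).mpr h3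
      have hUle : (∑' j : ℕ, v (j + 1)) ≤ (∑' m, f m) / (1 - ∑' m, f m) := by
        rw [ENNReal.tsum_eq_iSup_nat]
        exact iSup_le hcap
      rw [hUtop] at hUle
      exact absurd (top_le_iff.mp hUle) (ENNReal.div_lt_top hFt h1F0).ne
    rw [hPtop, hF1, hUtop]
    simp
  · -- convergent series
    have h1U0 : (1 : ℝ≥0∞) + (∑' j : ℕ, v (j + 1)) ≠ 0 := by simp
    have h1Ut : (1 : ℝ≥0∞) + (∑' j : ℕ, v (j + 1)) ≠ ⊤ := by
      simp [ENNReal.add_eq_top, hUtop]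
    have hF_eq : (∑' m, f m)
        = (∑' j : ℕ, v (j + 1)) * (1 + ∑' j : ℕ, v (j + 1))⁻¹ := by
      calc (∑' m, f m)
          = (∑' m, f m) * (1 + ∑' j : ℕ, v (j + 1)) * (1 + ∑' j : ℕ, v (j + 1))⁻¹ := by
            rw [mul_assoc, ENNReal.mul_inv_cancel h1U0 h1Ut, mul_one]
        _ = (∑' j : ℕ, v (j + 1)) * (1 + ∑' j : ℕ, v (j + 1))⁻¹ := by rw [← hmaster]
    have hsum1 : (1 + ∑' j : ℕ, v (j + 1))⁻¹
        + (∑' j : ℕ, v (j + 1)) * (1 + ∑' j : ℕ, v (j + 1))⁻¹ = 1 := by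
      calc (1 + ∑' j : ℕ, v (j + 1))⁻¹
            + (∑' j : ℕ, v (j + 1)) * (1 + ∑' j : ℕ, v (j + 1))⁻¹
          = (1 + ∑' j : ℕ, v (j + 1)) * (1 + ∑' j : ℕ, v (j + 1))⁻¹ := by
            rw [add_mul, one_mul]
        _ = 1 := ENNReal.mul_inv_cancel h1U0 h1Ut
    rw [hPtop, hF_eq]
    exact ENNReal.sub_eq_of_eq_add
      (ENNReal.mul_ne_top hUtop (ENNReal.inv_ne_top.mpr h1U0)) hsum1.symm
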